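/- arXiv:1210.8397 — 7 statements merged into one kernel-verified Lean document; each statement's English description precedes it below -/
import Mathlib

section
/- Let m = 2k with k ∈ ℕ and β ∈ (k+1, m+1]. Then the point k/(β-1) satisfies ((k-1)β + m - (k-1))/(β(β-1)) < k/(β-1) < (k+1)/β; in particular k/(β-1) lies in the k-th digit interval but in no other digit interval. -/
theorem stmt_6 (k : ℕ) (m : ℕ) (hm : m = 2 * k) (β : ℝ)
    (hβ1 : (k : ℝ) + 1 < β) (hβ2 : β ≤ m + 1) :
    (((k : ℝ) - 1) * β + m - ((k : ℝ) - 1)) / (β * (β - 1)) < (k : ℝ) / (β - 1) ∧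
      (k : ℝ) / (β - 1) < ((k : ℝ) + 1) / β := by
  have hk : (0 : ℝ) ≤ k := Nat.cast_nonneg k
  have hβ : (0 : ℝ) < β := by linarith
  have hβ1' : (0 : ℝ) < β - 1 := by linarith
  subst hm
  push_cast
  constructor
  · rw [div_lt_div_iff₀ (by positivity) hβ1']
    nlinarith
  · rw [div_lt_div_iff₀ hβ1' hβ]
    nlinarith
end

section
/- Let m = 2k with k ≥ 1 and β ∈ (k+1, m+1]. Then the constant sequence (ε_i) with ε_i = k for all i is the unique sequence in {0,...,m}^ℕ satisfying Σ ε_i β^{-i} = k/(β-1). -/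
lemma geo_aux (β : ℝ) (hβ : 1 < β) :
    ∑' i : ℕ, (1/β) ^ (i+1) = 1/(β-1) := by
  have hβ0 : 0 < β := by linarith
  have hlt : |1/β| < 1 := by
    rw [abs_of_pos (by positivity), div_lt_one hβ0]; linarith
  have h := tsum_geometric_of_lt_one (r := 1/β) (by positivity) (by rw [div_lt_one hβ0]; linarith)
  calc ∑' i : ℕ, (1/β) ^ (i+1) = ∑' i : ℕ, (1/β) * (1/β)^i := by
        congr 1; ext i; ring
    _ = (1/β) * ∑' i : ℕ, (1/β)^i := tsum_mul_left
    _ = (1/β) * (1 - 1/β)⁻¹ := by rw [h]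
    _ = 1/(β-1) := by field_simp

lemma summable_aux (β : ℝ) (hβ : 1 < β) (f : ℕ → ℝ) (C : ℝ)
    (hf : ∀ i, |f i| ≤ C) : Summable (fun i : ℕ => f i / β ^ (i+1)) := by
  have hβ0 : 0 < β := by linarith
  have hC : 0 ≤ C := le_trans (abs_nonneg _) (hf 0)
  have hgeo : Summable (fun i : ℕ => C * (1/β)^(i+1)) := by
    apply Summable.mul_left
    have : Summable (fun i : ℕ => (1/β)^i) :=
      summable_geometric_of_lt_one (by positivity) (by rw [div_lt_one hβ0]; linarith)
    simpa [pow_succ, mul_comm] using this.mul_right (1/β)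
  apply Summable.of_abs
  apply Summable.of_nonneg_of_le (fun i => abs_nonneg _) _ hgeo
  intro i
  rw [abs_div, abs_of_pos (by positivity : (0:ℝ) < β ^ (i+1))]
  rw [one_div_pow, mul_one_div, div_le_div_iff₀ (by positivity) (by positivity)]
  nlinarith [hf i, pow_pos hβ0 (i+1)]

lemma const_sum (β : ℝ) (hβ : 1 < β) (c : ℝ) :
    ∑' i : ℕ, c / β ^ (i+1) = c / (β-1) := by
  have := geo_aux β hβ
  calc ∑' i : ℕ, c / β ^ (i+1) = ∑' i : ℕ, c * (1/β)^(i+1) := by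
        congr 1; ext i; rw [one_div_pow, mul_one_div]
    _ = c * ∑' i : ℕ, (1/β)^(i+1) := tsum_mul_left
    _ = c * (1/(β-1)) := by rw [this]
    _ = c / (β-1) := by ring

theorem stmt_7 (k : ℕ) (hk : 1 ≤ k) (m : ℕ) (hm : m = 2 * k) (β : ℝ)
    (hβ1 : (k : ℝ) + 1 < β) (hβ2 : β ≤ m + 1)
    (ε : ℕ → ℕ) (hε : ∀ i, ε i ≤ m) :
    (∑' i : ℕ, (ε i : ℝ) / β ^ (i + 1)) = (k : ℝ) / (β - 1) ↔ ∀ i, ε i = k := by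
  have hk1 : (1:ℝ) ≤ k := by exact_mod_cast hk
  have hβ : 1 < β := by linarith
  have hβ0 : 0 < β := by linarith
  constructor
  · intro hsum
    by_contra hcon
    push_neg at hcon
    set n := Nat.find hcon with hndef
    have hn : ε n ≠ k := Nat.find_spec hcon
    have hmin : ∀ i < n, ε i = k := fun i hi => by
      have := Nat.find_min hcon hi; simpa using this
    set D : ℕ → ℝ := fun i => ((ε i : ℝ) - k) / β ^ (i+1) with hDdef
    have habs : ∀ i, |(ε i : ℝ) - (k:ℝ)| ≤ k := by
      intro i
      have h1 : (ε i : ℝ) ≤ 2 * k := by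
        have := hε i; rw [hm] at this; exact_mod_cast this
      have h2 : (0:ℝ) ≤ ε i := Nat.cast_nonneg _
      rw [abs_le]; constructor <;> linarith
    have hg : Summable (fun i : ℕ => (ε i : ℝ) / β ^ (i+1)) := by
      apply summable_aux β hβ _ (m:ℝ)
      intro i
      rw [abs_of_nonneg (Nat.cast_nonneg _)]
      exact_mod_cast hε i
    have hc : Summable (fun i : ℕ => (k:ℝ) / β ^ (i+1)) :=
      summable_aux β hβ _ (k:ℝ) (fun i => by
        rw [abs_of_nonneg (Nat.cast_nonneg _)])
    have hD : Summable D := summable_aux β hβ _ (k:ℝ) habs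
    have hDzero : ∑' i, D i = 0 := by
      have heq : ∀ i : ℕ, D i = (ε i : ℝ) / β ^ (i+1) - (k:ℝ)/β^(i+1) := fun i => by
        simp only [hDdef, sub_div]
      rw [tsum_congr heq, Summable.tsum_sub hg hc, hsum, const_sum β hβ]
      ring
    have hsplit := Summable.sum_add_tsum_nat_add (f := D) (n+1) hD
    have hhead : ∑ i ∈ Finset.range (n+1), D i = D n := by
      apply Finset.sum_eq_single_of_mem n (Finset.self_mem_range_succ n)
      intro b hb hbn
      have hb' : b < n := lt_of_le_of_ne (Nat.lt_succ_iff.mp (Finset.mem_range.mp hb)) hbn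
      simp [hDdef, hmin b hb']
    rw [hDzero, hhead] at hsplit
    have htail_sum : Summable (fun i : ℕ => D (i + (n+1))) :=
      (summable_nat_add_iff (n+1)).2 hD
    have hDn : |D n| ≤ ∑' i, |D (i + (n+1))| := by
      have h1 : D n = - ∑' i, D (i + (n+1)) := by linarith
      rw [h1, abs_neg]
      simpa [Real.norm_eq_abs] using
        norm_tsum_le_tsum_norm (f := fun i => D (i + (n+1)))
          (by simpa [Real.norm_eq_abs] using htail_sum.abs)
    have hrhs_sum : Summable (fun i : ℕ => (k:ℝ)/β^(n+1) * (1/β)^(i+1)) := by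
      apply Summable.mul_left
      have hgs : Summable (fun i : ℕ => (1/β)^i) :=
        summable_geometric_of_lt_one (by positivity) (by rw [div_lt_one hβ0]; linarith)
      simpa [pow_succ, mul_comm] using hgs.mul_right (1/β)
    have hle : ∀ i : ℕ, |D (i + (n+1))| ≤ (k:ℝ)/β^(n+1) * (1/β)^(i+1) := by
      intro i
      have hexp : i + (n+1) + 1 = (n+1) + (i+1) := by omega
      calc |D (i + (n+1))| = |(ε (i+(n+1)):ℝ) - k| / β ^ (i+(n+1)+1) := by
            rw [hDdef]; rw [abs_div, abs_of_pos (pow_pos hβ0 _)]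
        _ ≤ (k:ℝ) / β ^ (i+(n+1)+1) := by gcongr; exact habs _
        _ = (k:ℝ)/β^(n+1) * (1/β)^(i+1) := by
            rw [hexp, pow_add, one_div_pow]
            field_simp
    have hbound : ∑' i, |D (i + (n+1))| ≤ (k:ℝ)/β^(n+1) * (1/(β-1)) := by
      have := Summable.tsum_le_tsum hle htail_sum.abs hrhs_sum
      calc ∑' i, |D (i + (n+1))| ≤ ∑' i : ℕ, (k:ℝ)/β^(n+1) * (1/β)^(i+1) := this
        _ = (k:ℝ)/β^(n+1) * ∑' i : ℕ, (1/β)^(i+1) := tsum_mul_left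
        _ = (k:ℝ)/β^(n+1) * (1/(β-1)) := by rw [geo_aux β hβ]
    have hz : ((ε n : ℤ) - k) ≠ 0 := sub_ne_zero.2 (by exact_mod_cast hn)
    have h1 : (1:ℤ) ≤ |(ε n : ℤ) - k| := Int.one_le_abs hz
    have h1' : (1:ℝ) ≤ |(ε n : ℝ) - k| := by
      have := (@Int.cast_le ℝ _ _ _).2 h1
      rw [Int.cast_abs] at this
      push_cast at this
      exact this
    have hlow : 1/β^(n+1) ≤ |D n| := by
      rw [hDdef]
      rw [abs_div, abs_of_pos (pow_pos hβ0 _)]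
      gcongr
    have hfin : 1/β^(n+1) ≤ (k:ℝ)/β^(n+1) * (1/(β-1)) :=
      le_trans hlow (le_trans hDn hbound)
    rw [mul_one_div, div_div, div_le_div_iff₀ (pow_pos hβ0 _)
      (mul_pos (pow_pos hβ0 _) (by linarith : (0:ℝ) < β - 1))] at hfin
    nlinarith [pow_pos hβ0 (n+1)]
  · intro h
    simp only [h]
    exact const_sum β hβ k
end

section
/- Let m = 2k+1 with k ∈ ℕ. For real β with (2k+3)/2 ≤ β < (k+1+√(k²+6k+5))/2 and i ∈ {1,...,k}, if x lies in the i-th fixed digit interval [((i-1)β+m-(i-1))/(β(β-1)), (i+1)/β], then βx - i < (kβ + m - k)/(β(β-1)). -/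
theorem stmt_9 (k : ℕ) (m : ℕ) (hm : m = 2 * k + 1) (β : ℝ)
    (hβ1 : (2 * (k : ℝ) + 3) / 2 ≤ β)
    (hβ2 : β < ((k : ℝ) + 1 + Real.sqrt ((k : ℝ) ^ 2 + 6 * k + 5)) / 2)
    (i : ℕ) (hi1 : 1 ≤ i) (hi2 : i ≤ k) (x : ℝ)
    (hx : x ∈ Set.Icc ((((i : ℝ) - 1) * β + m - ((i : ℝ) - 1)) / (β * (β - 1)))
      (((i : ℝ) + 1) / β)) :
    β * x - i < ((k : ℝ) * β + m - k) / (β * (β - 1)) := by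
  have hk0 : (0 : ℝ) ≤ (k : ℝ) := Nat.cast_nonneg k
  have hβgt1 : (1 : ℝ) < β := by linarith
  have hβpos : (0 : ℝ) < β := by linarith
  have hden : (0 : ℝ) < β * (β - 1) := by nlinarith
  have hs : Real.sqrt ((k : ℝ) ^ 2 + 6 * k + 5) ^ 2 = (k : ℝ) ^ 2 + 6 * k + 5 :=
    Real.sq_sqrt (by positivity)
  have hsnn : 0 ≤ Real.sqrt ((k : ℝ) ^ 2 + 6 * k + 5) := Real.sqrt_nonneg _
  -- key quadratic inequality: β^2 - (k+1)β - (k+1) < 0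
  have hq : β * (β - 1) < (k : ℝ) * β + ((k : ℝ) + 1) := by
    nlinarith [sq_nonneg (Real.sqrt ((k : ℝ) ^ 2 + 6 * k + 5) - (2 * β - ((k : ℝ) + 1)))]
  have hx2 : x ≤ ((i : ℝ) + 1) / β := hx.2
  have hbx : β * x ≤ (i : ℝ) + 1 := by
    have := (le_div_iff₀ hβpos).mp hx2
    linarith [mul_comm x β]
  have h1 : β * x - (i : ℝ) ≤ 1 := by linarith
  have h2 : (1 : ℝ) < ((k : ℝ) * β + m - k) / (β * (β - 1)) := by
    rw [lt_div_iff₀ hden]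
    have : (m : ℝ) = 2 * k + 1 := by rw [hm]; push_cast; ring
    nlinarith
  linarith
end

section
/- Let m = 2k+1 with k ∈ ℕ and β ∈ ((k+1+√(k²+6k+5))/2, m+1]. Then (kβ + (m-k))/(β(β-1)) < ((k+1)β + k)/(β²-1) < (k+2)/β. -/
theorem stmt_12 (k : ℕ) (m : ℕ) (hm : m = 2 * k + 1) (β : ℝ)
    (hβ1 : ((k : ℝ) + 1 + Real.sqrt ((k : ℝ) ^ 2 + 6 * k + 5)) / 2 < β)
    (hβ2 : β ≤ m + 1) :
    ((k : ℝ) * β + ((m : ℝ) - k)) / (β * (β - 1)) <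
        (((k : ℝ) + 1) * β + k) / (β ^ 2 - 1) ∧
      (((k : ℝ) + 1) * β + k) / (β ^ 2 - 1) < ((k : ℝ) + 2) / β := by
  have hk0 : (0:ℝ) ≤ (k:ℝ) := Nat.cast_nonneg k
  set s := Real.sqrt ((k : ℝ) ^ 2 + 6 * k + 5) with hs
  have hs0 : 0 ≤ s := Real.sqrt_nonneg _
  have hs2 : s ^ 2 = (k : ℝ) ^ 2 + 6 * k + 5 := Real.sq_sqrt (by positivity)
  have hsgt : s > 2 := by nlinarith
  have hβ1' : (k : ℝ) + 1 + s < 2 * β := by linarith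
  have hβgt1 : 1 < β := by nlinarith
  have hkey : 0 < β ^ 2 - ((k:ℝ) + 1) * β - ((k:ℝ) + 1) := by nlinarith
  have hβ0 : 0 < β := by linarith
  have hd1 : 0 < β * (β - 1) := by nlinarith
  have hd2 : 0 < β ^ 2 - 1 := by nlinarith
  have hmr : (m : ℝ) = 2 * k + 1 := by exact_mod_cast congrArg (Nat.cast : ℕ → ℝ) hm
  constructor
  · rw [div_lt_div_iff₀ hd1 hd2, hmr]
    nlinarith [mul_pos (sub_pos.2 hβgt1) hkey]
  · rw [div_lt_div_iff₀ hd2 hβ0]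
    nlinarith
end

section
/- Let m = 2k+1 with k ∈ ℕ and β ∈ ((k+1+√(k²+6k+5))/2, m+1]. Then the periodic sequence (k, k+1, k, k+1, ...) is the unique sequence (ε_i) ∈ {0,...,m}^ℕ with Σ ε_i β^{-i} = (kβ + (k+1))/(β² - 1). -/
set_option maxHeartbeats 2000000 in
theorem stmt_13 (k : ℕ) (m : ℕ) (hm : m = 2 * k + 1) (β : ℝ)
    (hβ1 : ((k : ℝ) + 1 + Real.sqrt ((k : ℝ) ^ 2 + 6 * k + 5)) / 2 < β)
    (hβ2 : β ≤ m + 1)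
    (ε : ℕ → ℕ) (hε : ∀ i, ε i ≤ m) :
    (∑' i : ℕ, (ε i : ℝ) / β ^ (i + 1)) = ((k : ℝ) * β + (k + 1)) / (β ^ 2 - 1) ↔
      ∀ i, ε i = if Even i then k else k + 1 := by
  have hk0 : (0:ℝ) ≤ (k:ℝ) := Nat.cast_nonneg k
  have hs0 : 0 ≤ Real.sqrt ((k:ℝ)^2 + 6*k + 5) := Real.sqrt_nonneg _
  have hsq : Real.sqrt ((k:ℝ)^2 + 6*k + 5) ^ 2 = (k:ℝ)^2 + 6*k + 5 :=
    Real.sq_sqrt (by positivity)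
  have hkey : ((k:ℝ)+1) * (β+1) < β^2 := by
    have h1 : Real.sqrt ((k:ℝ)^2 + 6*k + 5) < 2*β - ((k:ℝ)+1) := by linarith
    have h2 := pow_lt_pow_left₀ h1 hs0 (n := 2) (by norm_num)
    rw [hsq] at h2
    nlinarith [h2]
  have hβ : 1 < β := by nlinarith [hkey, hk0, hs0, hβ1]
  have hβpos : (0:ℝ) < β := by linarith
  have hx2 : (k:ℝ)*β + (k:ℝ) + 2 < β^2 := by nlinarith [hkey]
  have hd : (0:ℝ) < β^2 - 1 := by nlinarith
  have hd1 : (0:ℝ) < β - 1 := by linarith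
  set x : ℝ := ((k : ℝ) * β + ((k:ℝ) + 1)) / (β ^ 2 - 1) with hxdef
  set y : ℝ := (((k:ℝ) + 1) * β + (k:ℝ)) / (β ^ 2 - 1) with hydef
  have hx0 : 0 < x := by
    apply div_pos _ hd; nlinarith
  have hy0 : 0 < y := by
    apply div_pos _ hd; nlinarith
  have hx1 : x < 1 := by
    rw [hxdef, div_lt_one hd]; linarith
  have hy1 : y < 1 := by
    rw [hydef, div_lt_one hd]; linarith
  have hbx : β * x = (k:ℝ) + y := by
    rw [hxdef, hydef]; field_simp; ring
  have hby : β * y = ((k:ℝ) + 1) + x := by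
    rw [hxdef, hydef]; field_simp; ring
  have key1 : (m:ℝ) / (β - 1) < y + 1 := by
    rw [div_lt_iff₀ hd1, hm]
    push_cast
    rw [hydef]
    rw [div_add' _ _ _ (ne_of_gt hd), div_mul_eq_mul_div, lt_div_iff₀ hd]
    nlinarith [mul_pos hd1 (show (0:ℝ) < β^2 - ((k:ℝ)*β + (k:ℝ) + 2) by linarith)]
  have key2 : (m:ℝ) / (β - 1) < x + 1 := by
    rw [div_lt_iff₀ hd1, hm]
    push_cast
    rw [hxdef]
    rw [div_add' _ _ _ (ne_of_gt hd), div_mul_eq_mul_div, lt_div_iff₀ hd]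
    nlinarith [mul_pos hd1 (show (0:ℝ) < β^2 - (((k:ℝ)+1)*β + ((k:ℝ)+1)) by linarith)]
  -- summability
  have hgeom : Summable (fun i : ℕ => (1/β)^i) :=
    summable_geometric_of_lt_one (by positivity) (by rw [div_lt_one hβpos]; exact hβ)
  have hgle : ∀ n i : ℕ, (ε (n + i) : ℝ) / β ^ (i+1) ≤ (m:ℝ)/β * (1/β)^i := by
    intro n i
    have h1 : (m:ℝ)/β * (1/β)^i = (m:ℝ) / β^(i+1) := by
      rw [one_div_pow, div_mul_div_comm, mul_one, pow_succ, mul_comm]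
    rw [h1]
    apply div_le_div₀ (by positivity) _ (by positivity) le_rfl
    exact_mod_cast hε (n+i)
  have hsum : ∀ n : ℕ, Summable (fun i : ℕ => (ε (n + i) : ℝ) / β ^ (i+1)) := by
    intro n
    exact Summable.of_nonneg_of_le (fun i => by positivity) (hgle n) (hgeom.mul_left _)
  set S : ℕ → ℝ := fun n => ∑' i : ℕ, (ε (n + i) : ℝ) / β ^ (i+1) with hSdef
  have hS0 : ∀ n, 0 ≤ S n := fun n => tsum_nonneg (fun i => by positivity)
  have hSle : ∀ n, S n ≤ (m:ℝ)/(β-1) := by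
    intro n
    have h1 : S n ≤ ∑' i : ℕ, (m:ℝ)/β * (1/β)^i :=
      Summable.tsum_le_tsum (hgle n) (hsum n) (hgeom.mul_left _)
    rw [tsum_mul_left, tsum_geometric_of_lt_one (by positivity)
      (by rw [div_lt_one hβpos]; exact hβ)] at h1
    have h2 : (m:ℝ)/β * (1 - 1/β)⁻¹ = (m:ℝ)/(β-1) := by
      rw [inv_eq_one_div]
      field_simp
    rw [h2] at h1
    exact h1
  have hrec : ∀ n, S n = (ε n : ℝ)/β + S (n+1) * (1/β) := by
    intro n
    have h0 := Summable.tsum_eq_zero_add (hsum n)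
    have h1 : ∀ i : ℕ, (ε (n + (i+1)) : ℝ) / β ^ (i+1+1)
        = (ε ((n+1) + i) : ℝ) / β ^ (i+1) * (1/β) := by
      intro i
      rw [show n + (i+1) = (n+1) + i from by ring, mul_one_div, div_div, ← pow_succ]
    calc S n = (ε (n+0) : ℝ)/β^(0+1) + ∑' i : ℕ, (ε (n + (i+1)) : ℝ) / β ^ (i+1+1) := h0
      _ = (ε n : ℝ)/β + S (n+1) * (1/β) := by
          rw [show n + 0 = n from rfl, pow_one]
          congr 1
          rw [tsum_congr h1, tsum_mul_right]
  have hstep : ∀ (n : ℕ) (a : ℕ) (u v : ℝ), S n = u → β * u = (a:ℝ) + v → 0 < v → v < 1 →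
      (m:ℝ)/(β-1) < v + 1 → ε n = a ∧ S (n+1) = v := by
    intro n a u v hn hbu hv0 hv1 hkeyv
    have hr := hrec n
    rw [hn] at hr
    have h1 : S (n+1) = β * u - (ε n : ℝ) := by
      have hb : β ≠ 0 := ne_of_gt hβpos
      have h2 : u * β = (ε n : ℝ) + S (n+1) := by
        rw [hr, add_mul, div_mul_cancel₀ _ hb, mul_one_div, div_mul_cancel₀ _ hb]
      linarith
    have hub : (ε n : ℝ) < (a:ℝ) + 1 := by
      have h2 := hS0 (n+1)
      rw [h1] at h2
      linarith [hbu]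
    have hlb : (a:ℝ) - 1 < (ε n : ℝ) := by
      have h2 := hSle (n+1)
      rw [h1] at h2
      linarith [hbu]
    have hεa : ε n = a := by
      have h3 : ε n < a + 1 := by exact_mod_cast (by push_cast; linarith : (ε n:ℝ) < ((a:ℕ):ℝ) + 1)
      have h4 : (a:ℝ) < (ε n : ℝ) + 1 := by linarith
      have h5 : a < ε n + 1 := by exact_mod_cast h4
      omega
    refine ⟨hεa, ?_⟩
    rw [h1, hεa]
    linarith [hbu]
  constructor
  · intro h
    have hSx : S 0 = x := by
      rw [hSdef]
      simpa using h
    have hS' : ∀ n, S n = if Even n then x else y := by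
      intro n
      induction n with
      | zero => simpa using hSx
      | succ n ih =>
        by_cases hpar : Even n
        · rw [if_pos hpar] at ih
          rw [if_neg (by simp [Nat.even_add_one, hpar])]
          exact (hstep n k x y ih hbx hy0 hy1 key1).2
        · rw [if_neg hpar] at ih
          rw [if_pos (Nat.even_add_one.mpr hpar)]
          exact (hstep n (k+1) y x ih (by push_cast; linarith [hby]) hx0 hx1 key2).2
    intro i
    by_cases hpar : Even i
    · rw [if_pos hpar]
      exact (hstep i k x y (by rw [hS' i, if_pos hpar]) hbx hy0 hy1 key1).1
    · rw [if_neg hpar]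
      exact (hstep i (k+1) y x (by rw [hS' i, if_neg hpar])
        (by push_cast; linarith [hby]) hx0 hx1 key2).1
  · intro h
    have hf : Summable (fun i : ℕ => (ε i : ℝ) / β ^ (i+1)) := by
      have := hsum 0
      simpa using this
    have hr2 : (0:ℝ) ≤ 1/β^2 := by positivity
    have hr2' : 1/β^2 < 1 := by rw [div_lt_one (by positivity)]; nlinarith
    have heven : (fun j : ℕ => (ε (2*j) : ℝ) / β ^ (2*j+1))
        = fun j : ℕ => (k:ℝ)/β * (1/β^2)^j := by
      funext j
      rw [h (2*j), if_pos ⟨j, by ring⟩]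
      rw [one_div_pow, ← pow_mul, mul_one_div, div_div, ← pow_succ']
    have hodd : (fun j : ℕ => (ε (2*j+1) : ℝ) / β ^ (2*j+1+1))
        = fun j : ℕ => ((k:ℝ)+1)/β^2 * (1/β^2)^j := by
      funext j
      rw [h (2*j+1), if_neg (by simp [Nat.even_add_one, parity_simps])]
      push_cast
      rw [one_div_pow, ← pow_mul, mul_one_div, div_div,
        show β^2 * β^(2*j) = β^(2*j+1+1) from by rw [← pow_add]; ring_nf]
    have hse : Summable (fun j : ℕ => (ε (2*j) : ℝ) / β ^ (2*j+1)) := by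
      rw [heven]; exact (summable_geometric_of_lt_one hr2 hr2').mul_left _
    have hso : Summable (fun j : ℕ => (ε (2*j+1) : ℝ) / β ^ (2*j+1+1)) := by
      rw [hodd]; exact (summable_geometric_of_lt_one hr2 hr2').mul_left _
    have := tsum_even_add_odd (f := fun i : ℕ => (ε i : ℝ) / β ^ (i+1)) hse hso
    rw [← this, heven, hodd, tsum_mul_left, tsum_mul_left,
      tsum_geometric_of_lt_one hr2 hr2', hxdef]
    rw [inv_eq_one_div]
    field_simp
end

section
/- Let k ∈ ℕ, k ≥ 1, m = 2k, and β the positive root of β² - (k+1)β - k = 0. The only sequence (ε_i) ∈ {0,...,m}^ℕ such that for all i, (ε_i, ε_{i+1}, ...) is lexicographically strictly less than (k+1, k-1)^∞ and lexicographically strictly greater than (k-1, k+1)^∞, is the constant sequence (k)^∞. -/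
/-- Strict lexicographic order on sequences of naturals. -/
def LexLt (x y : ℕ → ℕ) : Prop :=
  ∃ n : ℕ, (∀ i < n, x i = y i) ∧ x n < y n

theorem stmt_17 (k : ℕ) (hk : 1 ≤ k) (m : ℕ) (hm : m = 2 * k)
    (ε : ℕ → ℕ) (hε : ∀ i, ε i ≤ m)
    (hupper : ∀ j : ℕ, LexLt (fun i => ε (j + i)) (fun i => if Even i then k + 1 else k - 1))
    (hlower : ∀ j : ℕ, LexLt (fun i => if Even i then k - 1 else k + 1) (fun i => ε (j + i))) :
    ∀ i, ε i = k := by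
  intro j
  have hA : ε j ≤ k := by
    obtain ⟨n, hmatch, hlt⟩ := hupper j
    simp only at hmatch hlt
    rcases Nat.eq_zero_or_pos n with hn | hn
    · subst hn
      simp only [Nat.add_zero, Even.zero, if_pos] at hlt
      omega
    · exfalso
      obtain ⟨n', hmatch', hlt'⟩ := hlower (j+1)
      simp only at hmatch' hlt'
      rcases lt_trichotomy (n'+1) n with h | h | h
      · -- ε (j+(n'+1)) = upper (n'+1) = lower n' , but ε (j+1+n') > lower n'
        have h1 := hmatch (n'+1) h
        have he : j + 1 + n' = j + (n'+1) := by omega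
        rw [he] at hlt'
        rcases Nat.even_or_odd n' with hp | hp
        · simp [Nat.even_add_one, hp] at h1 hlt'; omega
        · have hp' : ¬ Even n' := by simpa [Nat.not_even_iff_odd] using hp
          simp [Nat.even_add_one, hp'] at h1 hlt'; omega
      · -- n = n'+1 : ε (j+n) < upper n, ε (j+1+n') > lower n', upper n = lower n'
        subst h
        have he : j + 1 + n' = j + (n'+1) := by omega
        rw [he] at hlt'
        rcases Nat.even_or_odd n' with hp | hp
        · simp [Nat.even_add_one, hp] at hlt hlt'; omega
        · have hp' : ¬ Even n' := by simpa [Nat.not_even_iff_odd] using hp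
          simp [Nat.even_add_one, hp'] at hlt hlt'; omega
      · -- n < n'+1, so n-1 < n' : ε (j+1+(n-1)) = lower (n-1) = upper n, but ε (j+n) < upper n
        have h2 := hmatch' (n-1) (by omega)
        have he : j + 1 + (n-1) = j + n := by omega
        rw [he] at h2
        rcases Nat.even_or_odd n with hp | hp
        · have hp' : ¬ Even (n-1) := by
            rw [Nat.even_iff] at hp ⊢; omega
          simp [hp, hp'] at hlt h2; omega
        · have hp' : ¬ Even n := by simpa [Nat.not_even_iff_odd] using hp
          have hp2 : Even (n-1) := by
            rw [Nat.not_even_iff] at hp'; rw [Nat.even_iff]; omega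
          simp [hp', hp2] at hlt h2; omega
  have hB : k ≤ ε j := by
    obtain ⟨n, hmatch, hlt⟩ := hlower j
    simp only at hmatch hlt
    rcases Nat.eq_zero_or_pos n with hn | hn
    · subst hn
      simp only [Nat.add_zero, Even.zero, if_pos] at hlt
      omega
    · exfalso
      obtain ⟨n', hmatch', hlt'⟩ := hupper (j+1)
      simp only at hmatch' hlt'
      rcases lt_trichotomy (n'+1) n with h | h | h
      · have h1 := hmatch (n'+1) h
        have he : j + 1 + n' = j + (n'+1) := by omega
        rw [he] at hlt'
        rcases Nat.even_or_odd n' with hp | hp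
        · simp [Nat.even_add_one, hp] at h1 hlt'; omega
        · have hp' : ¬ Even n' := by simpa [Nat.not_even_iff_odd] using hp
          simp [Nat.even_add_one, hp'] at h1 hlt'; omega
      · subst h
        have he : j + 1 + n' = j + (n'+1) := by omega
        rw [he] at hlt'
        rcases Nat.even_or_odd n' with hp | hp
        · simp [Nat.even_add_one, hp] at hlt hlt'; omega
        · have hp' : ¬ Even n' := by simpa [Nat.not_even_iff_odd] using hp
          simp [Nat.even_add_one, hp'] at hlt hlt'; omega
      · have h2 := hmatch' (n-1) (by omega)
        have he : j + 1 + (n-1) = j + n := by omega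
        rw [he] at h2
        rcases Nat.even_or_odd n with hp | hp
        · have hp' : ¬ Even (n-1) := by
            rw [Nat.even_iff] at hp ⊢; omega
          simp [hp, hp'] at hlt h2; omega
        · have hp' : ¬ Even n := by simpa [Nat.not_even_iff_odd] using hp
          have hp2 : Even (n-1) := by
            rw [Nat.not_even_iff] at hp'; rw [Nat.even_iff]; omega
          simp [hp', hp2] at hlt h2; omega
  omega
end

section
/- Let k ∈ ℕ, k ≥ 1, m = 2k+1. If (ε_i) ∈ {0,...,m}^ℕ satisfies, for all i, (ε_i, ε_{i+1}, ...) < (k+1, k+1, k, k)^∞ and (ε_i, ε_{i+1}, ...) > (k, k, k+1, k+1)^∞ in the lexicographic order, then (ε_i) equals (k, k+1)^∞ or (k+1, k)^∞. -/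
theorem stmt_18 (k : ℕ) (hk : 1 ≤ k) (m : ℕ) (hm : m = 2 * k + 1)
    (ε : ℕ → ℕ) (hε : ∀ i, ε i ≤ m)
    (hupper : ∀ j : ℕ, LexLt (fun i => ε (j + i))
      (fun i => if i % 4 = 0 ∨ i % 4 = 1 then k + 1 else k))
    (hlower : ∀ j : ℕ, LexLt (fun i => if i % 4 = 0 ∨ i % 4 = 1 then k else k + 1)
      (fun i => ε (j + i))) :
    (∀ i, ε i = if Even i then k else k + 1) ∨
      (∀ i, ε i = if Even i then k + 1 else k) := by
  subst hm
  -- every value is at most k+1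
  have hub : ∀ i, ε i ≤ k + 1 := by
    intro i
    obtain ⟨n, h1, h2⟩ := hupper i
    simp only [] at h1 h2
    by_contra h
    push_neg at h
    rcases Nat.eq_zero_or_pos n with rfl | hn
    · simp only [Nat.add_zero] at h2
      split_ifs at h2 <;> omega
    · have := h1 0 hn
      simp only [Nat.add_zero] at this
      split_ifs at this <;> omega
  -- every value is at least k
  have hlb : ∀ i, k ≤ ε i := by
    intro i
    obtain ⟨n, h1, h2⟩ := hlower i
    simp only [] at h1 h2
    by_contra h
    push_neg at h
    rcases Nat.eq_zero_or_pos n with rfl | hn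
    · simp only [Nat.add_zero] at h2
      split_ifs at h2 <;> omega
    · have := h1 0 hn
      simp only [Nat.add_zero] at this
      split_ifs at this <;> omega
  -- no two consecutive values are equal
  have key : ∀ j, ε j ≠ ε (j + 1) := by
    intro j hjj
    rcases (by have := hlb j; have := hub j; omega : ε j = k ∨ ε j = k + 1) with hj | hj
    · -- ε j = ε (j+1) = k
      obtain ⟨n, h1, h2⟩ := hlower j
      simp only [] at h1 h2
      have hub2 := hub (j + n)
      have hcond : n % 4 = 0 ∨ n % 4 = 1 := by split_ifs at h2 with hc; exact hc; omega
      rw [if_pos hcond] at h2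
      have hn0 : n ≠ 0 := by rintro rfl; simp only [Nat.add_zero] at h2; omega
      have hn1 : n ≠ 1 := by rintro rfl; omega
      have hn4 : 4 ≤ n := by omega
      obtain ⟨n', g1, g2⟩ := hupper (j + 2)
      simp only [] at g1 g2
      rcases lt_trichotomy (n' + 2) n with hlt | heq | hgt
      · have hb := h1 (n' + 2) hlt
        rw [show j + (n' + 2) = j + 2 + n' by omega] at hb
        split_ifs at hb g2 <;> omega
      · rw [show j + 2 + n' = j + n by omega] at g2
        split_ifs at g2 <;> omega
      · have hb := g1 (n - 2) (by omega)
        rw [show j + 2 + (n - 2) = j + n by omega] at hb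
        have : (n - 2) % 4 = 2 ∨ (n - 2) % 4 = 3 := by omega
        split_ifs at hb <;> omega
    · -- ε j = ε (j+1) = k + 1
      obtain ⟨n, h1, h2⟩ := hupper j
      simp only [] at h1 h2
      have hlb2 := hlb (j + n)
      have hcond : n % 4 = 0 ∨ n % 4 = 1 := by split_ifs at h2 with hc; exact hc; omega
      rw [if_pos hcond] at h2
      have hn0 : n ≠ 0 := by rintro rfl; simp only [Nat.add_zero] at h2; omega
      have hn1 : n ≠ 1 := by rintro rfl; omega
      have hn4 : 4 ≤ n := by omega
      obtain ⟨n', g1, g2⟩ := hlower (j + 2)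
      simp only [] at g1 g2
      rcases lt_trichotomy (n' + 2) n with hlt | heq | hgt
      · have hb := h1 (n' + 2) hlt
        rw [show j + (n' + 2) = j + 2 + n' by omega] at hb
        split_ifs at hb g2 <;> omega
      · rw [show j + 2 + n' = j + n by omega] at g2
        split_ifs at g2 <;> omega
      · have hb := g1 (n - 2) (by omega)
        rw [show j + 2 + (n - 2) = j + n by omega] at hb
        have : (n - 2) % 4 = 2 ∨ (n - 2) % 4 = 3 := by omega
        split_ifs at hb <;> omega
  -- conclude by induction, branching on ε 0
  rcases (by have := hlb 0; have := hub 0; omega : ε 0 = k ∨ ε 0 = k + 1) with h0 | h0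
  · left
    intro i
    induction i with
    | zero => simpa using h0
    | succ i ih =>
      have h1 := key i
      have h2 := hlb (i + 1)
      have h3 := hub (i + 1)
      rcases Nat.even_or_odd i with he | ho
      · rw [if_pos he] at ih
        rw [if_neg (by simp [Nat.even_add_one, he])]
        omega
      · rw [if_neg (by simpa using ho)] at ih
        rw [if_pos (by simpa [Nat.even_add_one] using ho)]
        omega
  · right
    intro i
    induction i with
    | zero => simpa using h0
    | succ i ih =>
      have h1 := key i
      have h2 := hlb (i + 1)
      have h3 := hub (i + 1)
      rcases Nat.even_or_odd i with he | ho
      · rw [if_pos he] at ih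
        rw [if_neg (by simp [Nat.even_add_one, he])]
        omega
      · rw [if_neg (by simpa using ho)] at ih
        rw [if_pos (by simpa [Nat.even_add_one] using ho)]
        omega
end
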